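/- A permutation w of {1,…,n} is dominant if and only if w is maximal in two-sided weak order among permutations of its shape; that is, w avoids 132 if and only if there is no permutation u ≠ w with w ≤_{LR} u and α(u) = α(w). -/

import Mathlib

open scoped Classical

noncomputable section

namespace RajRegularity

variable {n : ℕ}

/-- Maximal length of an increasing subsequence of `w(i), …, w(n)` beginning with `w(i)`:
the largest cardinality of a set `s` of positions that contains `i`, consists of positions
`≥ i`, and on which `w` is strictly increasing. -/
def lisFrom (w : Equiv.Perm (Fin n)) (i : Fin n) : ℕ :=
  (Finset.univ.filter fun s : Finset (Fin n) =>
      i ∈ s ∧ (∀ j ∈ s, i ≤ j) ∧ ∀ j ∈ s, ∀ k ∈ s, j < k → w j < w k).sup Finset.card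

/-- `rajCode w i = (n − i + 1) −` (maximal length of an increasing subsequence of
`w(i), …, w(n)` beginning with `w(i)`); here positions are 0-based, so the number of
positions `≥ i` is `n - i`. -/
def rajCode (w : Equiv.Perm (Fin n)) (i : Fin n) : ℕ :=
  (n - (i : ℕ)) - lisFrom w i

/-- The Rajchgot index `raj w = Σᵢ rajCode w i`. -/
def raj (w : Equiv.Perm (Fin n)) : ℕ := ∑ i, rajCode w i

/-- The number of inversions of `w`: pairs of positions `i < j` with `w i > w j`. -/
def invNum (w : Equiv.Perm (Fin n)) : ℕ :=
  (Finset.univ.filter fun p : Fin n × Fin n => p.1 < p.2 ∧ w p.2 < w p.1).card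

/-- The `i`-th entry of the inv code: `ℓ_i(w) = #{ j : i < j, w j < w i }`. -/
def ellCode (w : Equiv.Perm (Fin n)) (i : Fin n) : ℕ :=
  (Finset.univ.filter fun j : Fin n => i < j ∧ w j < w i).card

/-- The set of descent positions of `w` (0-based position `j` with `w j > w (j+1)`). -/
def descents (w : Equiv.Perm (Fin n)) : Finset (Fin n) :=
  Finset.univ.filter fun j : Fin n =>
    if h : (j : ℕ) + 1 < n then w ⟨(j : ℕ) + 1, h⟩ < w j else False

/-- The major index: the sum of the (1-based) descent positions of `w`. -/
def maj (w : Equiv.Perm (Fin n)) : ℕ := ∑ j ∈ descents w, ((j : ℕ) + 1)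

/-- `mCode w i`: the number of descents of `w` at positions `≥ i`. -/
def mCode (w : Equiv.Perm (Fin n)) (i : Fin n) : ℕ :=
  ((descents w).filter fun j => i ≤ j).card

/-- `w` is dominant iff it avoids the pattern 132. -/
def Dominant (w : Equiv.Perm (Fin n)) : Prop :=
  ¬ ∃ i j k : Fin n, i < j ∧ j < k ∧ w i < w k ∧ w k < w j

/-- `w` is fireworks iff there are no positions `i < j` with `w j < w (j+1) < w i`. -/
def Fireworks (w : Equiv.Perm (Fin n)) : Prop :=
  ¬ ∃ (i j : Fin n) (h : (j : ℕ) + 1 < n),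
      i < j ∧ w j < w ⟨(j : ℕ) + 1, h⟩ ∧ w ⟨(j : ℕ) + 1, h⟩ < w i

/-- `w` is inverse fireworks iff `w⁻¹` is fireworks. -/
def InvFireworks (w : Equiv.Perm (Fin n)) : Prop := Fireworks w⁻¹

/-- `w` is a valley permutation: for some `a`, it is strictly decreasing on positions `≤ a`
and strictly increasing on positions `≥ a`. -/
def Valley (w : Equiv.Perm (Fin n)) : Prop :=
  ∃ a : ℕ, (∀ i j : Fin n, i < j → (j : ℕ) ≤ a → w j < w i) ∧
    ∀ i j : Fin n, a ≤ (i : ℕ) → i < j → w i < w j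

/-- `eps w i` is the (1-based) blob index `ε_i(w) = i + r_i(w)`. -/
def eps (w : Equiv.Perm (Fin n)) (i : Fin n) : ℕ := (i : ℕ) + 1 + rajCode w i

/-- The shape of `w`: `α_k(w) = #{ i : ε_i(w) = k }` (here `k : Fin n` stands for the
1-based index `k + 1`). -/
def shape (w : Equiv.Perm (Fin n)) : Fin n → ℕ := fun k =>
  (Finset.univ.filter fun i : Fin n => eps w i = (k : ℕ) + 1).card

/-- Dominance order on shapes: `α ⪰ β` iff every tail sum of `α` is at least the
corresponding tail sum of `β`. -/
def Dominates (α β : Fin n → ℕ) : Prop :=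
  ∀ m : Fin n,
    ∑ k ∈ Finset.univ.filter (fun k : Fin n => m ≤ k), β k ≤
      ∑ k ∈ Finset.univ.filter (fun k : Fin n => m ≤ k), α k

/-- Right weak order: `u ≤_R w` iff `w = u * v` length-additively. -/
def leR (u w : Equiv.Perm (Fin n)) : Prop :=
  ∃ v : Equiv.Perm (Fin n), w = u * v ∧ invNum w = invNum u + invNum v

/-- Left weak order: `u ≤_L w` iff `w = v * u` length-additively. -/
def leL (u w : Equiv.Perm (Fin n)) : Prop :=
  ∃ v : Equiv.Perm (Fin n), w = v * u ∧ invNum w = invNum v + invNum u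

/-- Two-sided weak order: the transitive closure of the union of left and right weak
orders (both are reflexive, so we may use the reflexive-transitive closure). -/
def leLR (u w : Equiv.Perm (Fin n)) : Prop :=
  Relation.ReflTransGen (fun a b : Equiv.Perm (Fin n) => leL a b ∨ leR a b) u w

/-- The maximum of the block of the set partition `π(w)` containing the value `v`;
the block of `v` is `{ v' : ε_{w⁻¹ v'}(w) = ε_{w⁻¹ v}(w) }`. -/
def blockMax (w : Equiv.Perm (Fin n)) (v : Fin n) : ℕ :=
  ((Finset.univ.filter fun v' : Fin n => eps w (w⁻¹ v') = eps w (w⁻¹ v)).max'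
      ⟨v, Finset.mem_filter.mpr ⟨Finset.mem_univ v, rfl⟩⟩).val

/-- The fireworks map `Φ`: the one-line word of `Φ w` lists the blocks of `π(w)` in
increasing order of their maxima, each block written in decreasing order.  Equivalently,
`Φ w` sorts the values by the key (max of block, value reversed), lexicographically. -/
def Phi (w : Equiv.Perm (Fin n)) : Equiv.Perm (Fin n) :=
  Tuple.sort fun v : Fin n => n * blockMax w v + (n - 1 - (v : ℕ))

/-- The inverse fireworks map `Φ_inv w = Φ(w⁻¹)⁻¹`. -/
def PhiInv (w : Equiv.Perm (Fin n)) : Equiv.Perm (Fin n) := (Phi w⁻¹)⁻¹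

/-- Partial sums of a sequence of block sizes. -/
def psum (a : ℕ → ℕ) (m : ℕ) : ℕ := ∑ j ∈ Finset.range m, a j

/-- The index of the block (interval `[psum a m, psum a (m+1))`) containing the value `v`. -/
def blockIdx (n : ℕ) (a : ℕ → ℕ) (v : Fin n) : ℕ :=
  ((Finset.range n).filter fun m => psum a (m + 1) ≤ (v : ℕ)).card

/-- The layered permutation with block sizes `a 0, a 1, …`: it reverses each of the
consecutive intervals `[psum a m, psum a (m+1))` of `{0, …, n-1}`.  Equivalently, its
one-line word sorts the values by (block index, value reversed) lexicographically. -/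
def layered (n : ℕ) (a : ℕ → ℕ) : Equiv.Perm (Fin n) :=
  Tuple.sort fun v : Fin n => n * blockIdx n a v + (n - 1 - (v : ℕ))

/-- The layered permutation `e_α` associated to a shape `α : Fin n → ℕ`. -/
def eOf (α : Fin n → ℕ) : Equiv.Perm (Fin n) :=
  layered n fun m => if h : m < n then α ⟨m, h⟩ else 0





def Valid (w : Equiv.Perm (Fin n)) (i : Fin n) (s : Finset (Fin n)) : Prop :=
  i ∈ s ∧ (∀ j ∈ s, i ≤ j) ∧ ∀ j ∈ s, ∀ k ∈ s, j < k → w j < w k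

lemma mem_validFilter {w : Equiv.Perm (Fin n)} {i : Fin n} {s : Finset (Fin n)} :
    s ∈ (Finset.univ.filter fun s : Finset (Fin n) =>
      i ∈ s ∧ (∀ j ∈ s, i ≤ j) ∧ ∀ j ∈ s, ∀ k ∈ s, j < k → w j < w k) ↔ Valid w i s := by
  simp [Valid]

lemma le_lisFrom {w : Equiv.Perm (Fin n)} {i : Fin n} {s : Finset (Fin n)}
    (hs : Valid w i s) : s.card ≤ lisFrom w i :=
  Finset.le_sup (mem_validFilter.mpr hs)

lemma lisFrom_le {w : Equiv.Perm (Fin n)} {i : Fin n} {m : ℕ}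
    (h : ∀ s, Valid w i s → s.card ≤ m) : lisFrom w i ≤ m :=
  Finset.sup_le fun s hs => h s (mem_validFilter.mp hs)

lemma valid_singleton (w : Equiv.Perm (Fin n)) (i : Fin n) : Valid w i {i} := by
  refine ⟨Finset.mem_singleton_self i, ?_, ?_⟩
  · intro j hj; rw [Finset.mem_singleton] at hj; subst hj; exact le_rfl
  · intro j hj k hk hlt
    rw [Finset.mem_singleton] at hj hk; subst hj; subst hk
    exact absurd hlt (lt_irrefl _)

lemma one_le_lisFrom (w : Equiv.Perm (Fin n)) (i : Fin n) : 1 ≤ lisFrom w i := by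
  simpa using le_lisFrom (valid_singleton w i)

lemma exists_valid_card (w : Equiv.Perm (Fin n)) (i : Fin n) :
    ∃ s, Valid w i s ∧ s.card = lisFrom w i := by
  obtain ⟨s, hs, heq⟩ := Finset.exists_mem_eq_sup _
    ⟨{i}, mem_validFilter.mpr (valid_singleton w i)⟩ Finset.card
  exact ⟨s, mem_validFilter.mp hs, heq.symm⟩

lemma lisFrom_le_sub (w : Equiv.Perm (Fin n)) (i : Fin n) : lisFrom w i ≤ n - (i : ℕ) := by
  apply lisFrom_le
  intro s hs
  have : s ⊆ Finset.Ici i := fun j hj => Finset.mem_Ici.mpr (hs.2.1 j hj)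
  calc s.card ≤ (Finset.Ici i).card := Finset.card_le_card this
    _ = n - (i : ℕ) := Fin.card_Ici i

def nextSet (w : Equiv.Perm (Fin n)) (i : Fin n) : Finset (Fin n) :=
  Finset.univ.filter fun k => i < k ∧ w i < w k

lemma mem_nextSet {w : Equiv.Perm (Fin n)} {i k : Fin n} :
    k ∈ nextSet w i ↔ i < k ∧ w i < w k := by simp [nextSet]

lemma lisFrom_succ_le {w : Equiv.Perm (Fin n)} {i k : Fin n} (hik : i < k) (hw : w i < w k) :
    lisFrom w k + 1 ≤ lisFrom w i := by
  obtain ⟨s, hs, hcard⟩ := exists_valid_card w k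
  have hnotmem : i ∉ s := fun h => absurd (hs.2.1 i h) (not_le.mpr hik)
  have hvalid : Valid w i (insert i s) := by
    refine ⟨Finset.mem_insert_self i s, ?_, ?_⟩
    · intro j hj
      rcases Finset.mem_insert.mp hj with rfl | hj
      · exact le_rfl
      · exact le_of_lt (lt_of_lt_of_le hik (hs.2.1 j hj))
    · intro j hj l hl hjl
      rcases Finset.mem_insert.mp hj with hj | hj
      · subst hj
        rcases Finset.mem_insert.mp hl with hl2 | hl2
        · exact absurd (hl2 ▸ hjl) (lt_irrefl _)
        · rcases eq_or_lt_of_le (hs.2.1 l hl2) with heq | hkl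
          · rw [← heq]; exact hw
          · exact lt_trans hw (hs.2.2 k hs.1 l hl2 hkl)
      · rcases Finset.mem_insert.mp hl with hl2 | hl2
        · exact absurd (hl2 ▸ lt_trans (lt_of_lt_of_le hik (hs.2.1 j hj)) hjl) (lt_irrefl _)
        · exact hs.2.2 j hj l hl2 hjl
  have := le_lisFrom hvalid
  rwa [Finset.card_insert_of_notMem hnotmem, hcard] at this

lemma lisFrom_rec (w : Equiv.Perm (Fin n)) (i : Fin n) :
    lisFrom w i = 1 + (nextSet w i).sup (lisFrom w) := by
  apply le_antisymm
  · apply lisFrom_le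
    intro s hs
    by_cases hsing : s = {i}
    · subst hsing; simp
    · have hne : (s.erase i).Nonempty := by
        rw [Finset.erase_nonempty hs.1]
        rcases Finset.eq_singleton_or_nontrivial hs.1 with h | h
        · exact absurd h hsing
        · exact h
      obtain ⟨k, hk, hkmin⟩ := Finset.exists_min_image (s.erase i) id hne
      have hks : k ∈ s := Finset.mem_of_mem_erase hk
      have hki : k ≠ i := Finset.ne_of_mem_erase hk
      have hik : i < k := lt_of_le_of_ne (hs.2.1 k hks) (Ne.symm hki)
      have hvalid : Valid w k (s.erase i) := by
        refine ⟨hk, fun j hj => hkmin j hj, ?_⟩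
        intro j hj l hl hjl
        exact hs.2.2 j (Finset.mem_of_mem_erase hj) l (Finset.mem_of_mem_erase hl) hjl
      have h1 : (s.erase i).card ≤ lisFrom w k := le_lisFrom hvalid
      have h2 : lisFrom w k ≤ (nextSet w i).sup (lisFrom w) :=
        Finset.le_sup (mem_nextSet.mpr ⟨hik, hs.2.2 i hs.1 k hks hik⟩)
      have h3 : s.card = (s.erase i).card + 1 := by
        rw [Finset.card_erase_of_mem hs.1]
        have : 1 ≤ s.card := Finset.card_pos.mpr ⟨i, hs.1⟩
        omega
      omega
  · rcases Finset.eq_empty_or_nonempty (nextSet w i) with h | h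
    · rw [h]; simpa using one_le_lisFrom w i
    · obtain ⟨k, hk, heq⟩ := Finset.exists_mem_eq_sup _ h (lisFrom w)
      rw [heq, add_comm]
      exact lisFrom_succ_le (mem_nextSet.mp hk).1 (mem_nextSet.mp hk).2





lemma eps_eq (w : Equiv.Perm (Fin n)) (i : Fin n) :
    eps w i = n + 1 - lisFrom w i := by
  have h1 := one_le_lisFrom w i
  have h2 := lisFrom_le_sub w i
  have h3 : (i : ℕ) < n := i.isLt
  unfold eps rajCode
  omega

lemma one_le_eps (w : Equiv.Perm (Fin n)) (i : Fin n) : 1 ≤ eps w i := by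
  unfold eps; omega

lemma eps_le (w : Equiv.Perm (Fin n)) (i : Fin n) : eps w i ≤ n := by
  have h1 := one_le_lisFrom w i
  have h3 : (i : ℕ) < n := i.isLt
  rw [eps_eq]
  omega

/-- Σ eps determined by shape. -/
lemma sum_eps_eq (w : Equiv.Perm (Fin n)) :
    ∑ i, eps w i = ∑ k : Fin n, ((k : ℕ) + 1) * shape w k := by
  have hf : ∀ i : Fin n, eps w i - 1 < n := fun i => by
    have h1 := one_le_eps w i; have h2 := eps_le w i; omega
  rw [← Finset.sum_fiberwise_of_maps_to
    (g := fun i : Fin n => (⟨eps w i - 1, hf i⟩ : Fin n)) (fun i _ => Finset.mem_univ _) (eps w)]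
  apply Finset.sum_congr rfl
  intro k _
  have hset : Finset.univ.filter (fun i : Fin n => (⟨eps w i - 1, hf i⟩ : Fin n) = k)
      = Finset.univ.filter (fun i : Fin n => eps w i = (k : ℕ) + 1) := by
    apply Finset.filter_congr
    intro i _
    constructor
    · intro h
      have := congrArg Fin.val h
      simp only at this
      have h1 := one_le_eps w i
      omega
    · intro h
      apply Fin.ext
      simp only [h]
      omega
  rw [hset]
  rw [Finset.sum_congr rfl (fun i hi => by
    simp only [Finset.mem_filter] at hi
    exact hi.2)]
  simp [shape, mul_comm]

/-- raj is determined by the shape. -/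
lemma raj_eq_of_shape {u w : Equiv.Perm (Fin n)} (h : shape u = shape w) :
    raj u = raj w := by
  have hu : ∑ i, eps u i = ∑ i : Fin n, ((i : ℕ) + 1) + raj u := by
    rw [raj, ← Finset.sum_add_distrib]
    rfl
  have hw : ∑ i, eps w i = ∑ i : Fin n, ((i : ℕ) + 1) + raj w := by
    rw [raj, ← Finset.sum_add_distrib]
    rfl
  have : ∑ i, eps u i = ∑ i, eps w i := by
    rw [sum_eps_eq, sum_eps_eq, h]
  omega

/-- invNum as a sum of ellCodes. -/
lemma invNum_eq_sum (w : Equiv.Perm (Fin n)) : invNum w = ∑ i, ellCode w i := by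
  unfold invNum ellCode
  rw [Finset.card_eq_sum_card_fiberwise
    (f := fun p : Fin n × Fin n => p.1) (t := Finset.univ) (fun x _ => Finset.mem_univ _)]
  apply Finset.sum_congr rfl
  intro i _
  apply Finset.card_bij (fun p _ => p.2)
  · intro p hp
    simp only [Finset.mem_filter, Finset.mem_univ, true_and] at hp ⊢
    obtain ⟨⟨h1, h2⟩, h3⟩ := hp
    rw [← h3]
    exact ⟨h1, h2⟩
  · intro p hp q hq hpq
    simp only [Finset.mem_filter, Finset.mem_univ, true_and] at hp hq
    exact Prod.ext (hp.2.trans hq.2.symm) hpq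
  · intro j hj
    simp only [Finset.mem_filter, Finset.mem_univ, true_and] at hj
    exact ⟨(i, j), by simp [hj.1, hj.2], rfl⟩

def gCard (w : Equiv.Perm (Fin n)) (i : Fin n) : ℕ :=
  (Finset.univ.filter fun j : Fin n => i < j ∧ w i < w j).card

lemma ell_add_g (w : Equiv.Perm (Fin n)) (i : Fin n) :
    ellCode w i + gCard w i = n - 1 - (i : ℕ) := by
  unfold ellCode gCard
  rw [← Finset.card_union_of_disjoint]
  · have : (Finset.univ.filter fun j : Fin n => i < j ∧ w j < w i) ∪
        (Finset.univ.filter fun j : Fin n => i < j ∧ w i < w j) = Finset.Ioi i := by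
      ext j
      simp only [Finset.mem_union, Finset.mem_filter, Finset.mem_univ, true_and, Finset.mem_Ioi]
      constructor
      · rintro (⟨h, _⟩ | ⟨h, _⟩) <;> exact h
      · intro h
        rcases lt_or_gt_of_ne (fun heq : w j = w i => (lt_irrefl j) (w.injective heq ▸ h)) with
          hlt | hgt
        · exact Or.inl ⟨h, hlt⟩
        · exact Or.inr ⟨h, hgt⟩
    rw [this, Fin.card_Ioi]
  · rw [Finset.disjoint_filter]
    rintro j _ ⟨_, h1⟩ ⟨_, h2⟩
    exact absurd (lt_trans h1 h2) (lt_irrefl _)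

lemma lisFrom_le_g (w : Equiv.Perm (Fin n)) (i : Fin n) :
    lisFrom w i ≤ gCard w i + 1 := by
  apply lisFrom_le
  intro s hs
  have hsub : s.erase i ⊆ Finset.univ.filter fun j : Fin n => i < j ∧ w i < w j := by
    intro j hj
    have hji : j ≠ i := Finset.ne_of_mem_erase hj
    have hjs : j ∈ s := Finset.mem_of_mem_erase hj
    have hij : i < j := lt_of_le_of_ne (hs.2.1 j hjs) (Ne.symm hji)
    simp only [Finset.mem_filter, Finset.mem_univ, true_and]
    exact ⟨hij, hs.2.2 i hs.1 j hjs hij⟩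
  have h1 : (s.erase i).card ≤ gCard w i := Finset.card_le_card hsub
  have h2 : s.card = (s.erase i).card + 1 := by
    rw [Finset.card_erase_of_mem hs.1]
    have : 1 ≤ s.card := Finset.card_pos.mpr ⟨i, hs.1⟩
    omega
  omega

lemma ellCode_le_rajCode (w : Equiv.Perm (Fin n)) (i : Fin n) :
    ellCode w i ≤ rajCode w i := by
  have h1 := lisFrom_le_g w i
  have h2 := ell_add_g w i
  have h3 : (i : ℕ) < n := i.isLt
  have h4 := lisFrom_le_sub w i
  unfold rajCode
  omega

lemma invNum_le_raj (w : Equiv.Perm (Fin n)) : invNum w ≤ raj w := by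
  rw [invNum_eq_sum, raj]
  exact Finset.sum_le_sum fun i _ => ellCode_le_rajCode w i

lemma dominant_lisFrom {w : Equiv.Perm (Fin n)} (hd : Dominant w) (i : Fin n) :
    lisFrom w i = gCard w i + 1 := by
  apply le_antisymm (lisFrom_le_g w i)
  have hvalid : Valid w i (insert i (Finset.univ.filter fun j : Fin n => i < j ∧ w i < w j)) := by
    refine ⟨Finset.mem_insert_self _ _, ?_, ?_⟩
    · intro j hj
      rcases Finset.mem_insert.mp hj with hj | hj
      · exact le_of_eq hj.symm
      · simp only [Finset.mem_filter] at hj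
        exact le_of_lt hj.2.1
    · intro j hj l hl hjl
      rcases Finset.mem_insert.mp hj with hj2 | hj2
      · rcases Finset.mem_insert.mp hl with hl2 | hl2
        · exact absurd ((hj2.trans hl2.symm) ▸ hjl) (lt_irrefl _)
        · simp only [Finset.mem_filter] at hl2
          exact hj2 ▸ hl2.2.2
      · rcases Finset.mem_insert.mp hl with hl2 | hl2
        · simp only [Finset.mem_filter] at hj2
          exact absurd (hl2 ▸ lt_trans hj2.2.1 hjl) (lt_irrefl _)
        · simp only [Finset.mem_filter, Finset.mem_univ, true_and] at hj2 hl2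
          by_contra hcon
          push_neg at hcon
          have hne : w l ≠ w j := fun heq => (lt_irrefl j) (w.injective heq ▸ hjl)
          have : w l < w j := lt_of_le_of_ne hcon hne
          exact hd ⟨i, j, l, hj2.1, hjl, hl2.2, this⟩
  have := le_lisFrom hvalid
  have hnm : i ∉ (Finset.univ.filter fun j : Fin n => i < j ∧ w i < w j) := by
    simp
  rw [Finset.card_insert_of_notMem hnm] at this
  exact this

lemma dominant_invNum_eq_raj {w : Equiv.Perm (Fin n)} (hd : Dominant w) :
    invNum w = raj w := by
  rw [invNum_eq_sum, raj]
  apply Finset.sum_congr rfl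
  intro i _
  have h1 := dominant_lisFrom hd i
  have h2 := ell_add_g w i
  have h3 : (i : ℕ) < n := i.isLt
  have h4 := lisFrom_le_sub w i
  unfold rajCode
  omega



lemma invNum_eq_zero {v : Equiv.Perm (Fin n)} (h : invNum v = 0) : v = 1 := by
  have hmono : StrictMono v := by
    intro x y hxy
    have : (x, y) ∉ Finset.univ.filter fun p : Fin n × Fin n => p.1 < p.2 ∧ v p.2 < v p.1 := by
      intro hm
      rw [invNum, Finset.card_eq_zero] at h
      rw [h] at hm
      exact absurd hm (Finset.notMem_empty _)
    simp only [Finset.mem_filter, Finset.mem_univ, true_and, not_and] at this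
    have := this hxy
    rcases lt_or_eq_of_le (not_lt.mp this) with h1 | h1
    · exact h1
    · exact absurd (v.injective h1) (ne_of_lt hxy)
  have h2 : (v : Fin n → Fin n) = id := by
    apply (StrictMono.range_inj hmono strictMono_id).mp
    simp [Set.range_eq_univ.mpr v.surjective]
  exact Equiv.ext fun x => congrFun h2 x

lemma invNum_le_of_step {a b : Equiv.Perm (Fin n)} (h : leL a b ∨ leR a b) :
    invNum a ≤ invNum b ∧ (invNum b ≤ invNum a → a = b) := by
  rcases h with ⟨v, heq, hinv⟩ | ⟨v, heq, hinv⟩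
  · constructor
    · omega
    · intro hle
      have : invNum v = 0 := by omega
      rw [heq, invNum_eq_zero this, one_mul]
  · constructor
    · omega
    · intro hle
      have : invNum v = 0 := by omega
      rw [heq, invNum_eq_zero this, mul_one]

lemma leLR_invNum {w u : Equiv.Perm (Fin n)} (h : leLR w u) :
    invNum w ≤ invNum u ∧ (invNum u ≤ invNum w → w = u) := by
  induction h with
  | refl => exact ⟨le_rfl, fun _ => rfl⟩
  | tail hab hstep ih =>
    obtain ⟨h1, h2⟩ := invNum_le_of_step hstep
    refine ⟨le_trans ih.1 h1, fun hle => ?_⟩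
    have hw : invNum w = invNum _ := le_antisymm ih.1 (by omega)
    rw [ih.2 (by omega)]
    exact h2 (by omega)

lemma invNum_one : invNum (1 : Equiv.Perm (Fin n)) = 0 := by
  unfold invNum
  rw [Finset.card_eq_zero, Finset.eq_empty_iff_forall_notMem]
  intro p hp
  replace hp := (Finset.mem_filter.mp hp).2
  simp only [Equiv.Perm.one_apply] at hp
  exact absurd (lt_trans hp.1 hp.2) (lt_irrefl _)

lemma invNum_inv (w : Equiv.Perm (Fin n)) : invNum w⁻¹ = invNum w := by
  unfold invNum
  apply Finset.card_bij' (fun p _ => (w⁻¹ p.2, w⁻¹ p.1)) (fun p _ => (w p.2, w p.1))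
  · intro p hp
    simp only [Finset.mem_filter, Finset.mem_univ, true_and] at hp ⊢
    refine ⟨hp.2, ?_⟩
    simp only [← Equiv.Perm.mul_apply, mul_inv_cancel, Equiv.Perm.one_apply]
    exact hp.1
  · intro p hp
    simp only [Finset.mem_filter, Finset.mem_univ, true_and] at hp ⊢
    refine ⟨hp.2, ?_⟩
    simp only [← Equiv.Perm.mul_apply, inv_mul_cancel, Equiv.Perm.one_apply]
    exact hp.1
  · intro p hp; simp
  · intro p hp; simp

/-- order-preservation of adjacent swap away from the pair -/
lemma swap_lt_swap {j j' : Fin n} (hj' : (j' : ℕ) = (j : ℕ) + 1) {x y : Fin n}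
    (hxy : x < y) (hne : ¬(x = j ∧ y = j')) :
    Equiv.swap j j' x < Equiv.swap j j' y := by
  have hv : ∀ {z t : Fin n}, z ≠ t → (z : ℕ) ≠ (t : ℕ) := fun h hc => h (Fin.ext hc)
  have hxy' : (x : ℕ) < (y : ℕ) := hxy
  by_cases hxj : x = j
  · have hyj' : y ≠ j' := fun h => hne ⟨hxj, h⟩
    have hyj : y ≠ j := fun h => absurd (hxj ▸ h ▸ hxy) (lt_irrefl _)
    rw [hxj, Equiv.swap_apply_left, Equiv.swap_apply_of_ne_of_ne hyj hyj']
    have h1 := hv hyj'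
    have h2 : ((j : Fin n) : ℕ) < (y : ℕ) := hxj ▸ hxy'
    rw [Fin.lt_def]
    omega
  · by_cases hxj' : x = j'
    · have hyj : y ≠ j := fun h => by
        rw [hxj', h] at hxy'
        omega
      have hyj2 : y ≠ j' := fun h => absurd (hxj' ▸ h ▸ hxy) (lt_irrefl _)
      rw [hxj', Equiv.swap_apply_right, Equiv.swap_apply_of_ne_of_ne hyj hyj2]
      have h2 : ((j' : Fin n) : ℕ) < (y : ℕ) := hxj' ▸ hxy'
      rw [Fin.lt_def]
      omega
    · rw [Equiv.swap_apply_of_ne_of_ne hxj hxj']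
      by_cases hyj : y = j
      · rw [hyj, Equiv.swap_apply_left, Fin.lt_def]
        have : (x : ℕ) < (j : ℕ) := hyj ▸ hxy'
        omega
      · by_cases hyj2 : y = j'
        · rw [hyj2, Equiv.swap_apply_right, Fin.lt_def]
          have h1 : (x : ℕ) < (j' : ℕ) := hyj2 ▸ hxy'
          have h2 := hv hxj
          omega
        · rw [Equiv.swap_apply_of_ne_of_ne hyj hyj2]
          exact hxy

/-- invNum increases by exactly 1 under a right adjacent swap at an ascent. -/
lemma invNum_mul_swap {w : Equiv.Perm (Fin n)} {j j' : Fin n} (hj' : (j' : ℕ) = (j : ℕ) + 1)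
    (hasc : w j < w j') : invNum (w * Equiv.swap j j') = invNum w + 1 := by
  set σ := Equiv.swap j j' with hσ
  have hjj' : j < j' := by rw [Fin.lt_def]; omega
  have hσj : σ j = j' := Equiv.swap_apply_left j j'
  have hσj' : σ j' = j := Equiv.swap_apply_right j j'
  have happ : ∀ x, (w * σ) x = w (σ x) := fun x => rfl
  have hmem : (j, j') ∈ Finset.univ.filter
      fun p : Fin n × Fin n => p.1 < p.2 ∧ (w * σ) p.2 < (w * σ) p.1 := by
    simp only [Finset.mem_filter, Finset.mem_univ, true_and, happ, hσj, hσj']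
    exact ⟨hjj', hasc⟩
  have hcard : (Finset.univ.filter
      fun p : Fin n × Fin n => p.1 < p.2 ∧ (w * σ) p.2 < (w * σ) p.1) =
      insert (j, j') ((Finset.univ.filter
        fun p : Fin n × Fin n => p.1 < p.2 ∧ w p.2 < w p.1).image
        fun p => (σ p.1, σ p.2)) := by
    ext p
    simp only [Finset.mem_insert, Finset.mem_image, Finset.mem_filter, Finset.mem_univ, true_and]
    constructor
    · rintro ⟨hlt, hinv⟩
      by_cases hp : p = (j, j')
      · exact Or.inl hp
      · refine Or.inr ⟨(σ p.1, σ p.2), ⟨?_, ?_⟩, ?_⟩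
        · apply swap_lt_swap hj' hlt
          intro ⟨h1, h2⟩
          exact hp (Prod.ext h1 h2)
        · rw [happ, happ] at hinv
          exact hinv
        · simp [hσ, Prod.ext_iff, Equiv.swap_apply_self]
    · rintro (rfl | ⟨q, ⟨hlt, hinv⟩, rfl⟩)
      · simp only [happ, hσj, hσj']
        exact ⟨hjj', hasc⟩
      · constructor
        · apply swap_lt_swap hj' hlt
          intro ⟨h1, h2⟩
          rw [h1, h2] at hinv
          exact absurd (lt_trans hinv hasc) (lt_irrefl _)
        · simp only [happ, Equiv.swap_apply_self, hσ, Equiv.Perm.mul_apply]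
          exact hinv
  rw [invNum, hcard, Finset.card_insert_of_notMem, Finset.card_image_of_injective, invNum,
    add_comm]
  · intro p q hpq
    simp only [Prod.ext_iff] at hpq ⊢
    exact ⟨σ.injective hpq.1, σ.injective hpq.2⟩
  · simp only [Finset.mem_image, Finset.mem_filter, Prod.ext_iff]
    rintro ⟨q, ⟨_, hlt, hinv⟩, h1, h2⟩
    have : q.1 = j' := by
      have := congrArg σ h1
      simpa [hσ, Equiv.swap_apply_self, hσj] using this
    have h2' : q.2 = j := by
      have := congrArg σ h2
      simpa [hσ, Equiv.swap_apply_self, hσj'] using this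
    rw [this, h2'] at hlt
    exact absurd (lt_trans hlt hjj') (lt_irrefl _)

/-- invNum of an adjacent transposition is 1 -/
lemma invNum_swap_adj {j j' : Fin n} (hj' : (j' : ℕ) = (j : ℕ) + 1) :
    invNum (Equiv.swap j j') = 1 := by
  have := invNum_mul_swap (w := 1) hj' (by
    simp only [Equiv.Perm.one_apply]
    rw [Fin.lt_def]; omega)
  rw [one_mul, invNum_one] at this
  omega

/-- invNum left multiplication by adjacent-value transposition -/
lemma invNum_swap_mul {w : Equiv.Perm (Fin n)} {a b : Fin n} (hb : (b : ℕ) = (a : ℕ) + 1)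
    (hpos : w⁻¹ a < w⁻¹ b) : invNum (Equiv.swap a b * w) = invNum w + 1 := by
  have h1 : Equiv.swap a b * w = (w⁻¹ * Equiv.swap a b)⁻¹ := by
    rw [mul_inv_rev, inv_inv, Equiv.swap_inv]
  have h2 : invNum (w⁻¹ * Equiv.swap a b) = invNum w⁻¹ + 1 :=
    invNum_mul_swap hb hpos
  rw [h1, invNum_inv, h2, invNum_inv]





lemma downward_induction {P : Fin n → Prop} (h : ∀ i, (∀ k, i < k → P k) → P i) :
    ∀ i, P i := by
  suffices H : ∀ m (i : Fin n), n - (i : ℕ) ≤ m → P i from fun i => H n i (by omega)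
  intro m
  induction m with
  | zero => intro i hi; exact absurd i.isLt (by omega)
  | succ m ih =>
    intro i hi
    refine h i fun k hk => ih k ?_
    have := Fin.lt_def.mp hk
    have := k.isLt
    omega

section LeftSwap

variable {w : Equiv.Perm (Fin n)} {p q : Fin n}

/-- Left swap of adjacent values preserves lisFrom pointwise. -/
lemma lisFrom_swap_mul (hpq : p < q) (hq : ((w q : Fin n) : ℕ) = ((w p : Fin n) : ℕ) + 1)
    (hcond : lisFrom w q ≤
      ((Finset.univ.filter fun k => p < k ∧ w q < w k)).sup (lisFrom w)) :
    ∀ i, lisFrom (Equiv.swap (w p) (w q) * w) i = lisFrom w i := by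
  set a := w p with ha
  set b := w q with hb
  set u := Equiv.swap a b * w with hu
  have hab : a ≠ b := fun h => by rw [h] at hq; omega
  have hup : u p = b := by rw [hu]; simp [Equiv.Perm.mul_apply, ← ha, Equiv.swap_apply_left]
  have huq : u q = a := by rw [hu]; simp [Equiv.Perm.mul_apply, ← hb, Equiv.swap_apply_right]
  have hux : ∀ x, x ≠ p → x ≠ q → u x = w x := by
    intro x hxp hxq
    rw [hu]
    simp only [Equiv.Perm.mul_apply]
    exact Equiv.swap_apply_of_ne_of_ne (fun h => hxp (w.injective h)) (fun h => hxq (w.injective h))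
  refine downward_induction fun i IH => ?_
  rw [lisFrom_rec u i, lisFrom_rec w i]
  congr 1
  have hsup1 : (nextSet u i).sup (lisFrom u) = (nextSet u i).sup (lisFrom w) :=
    Finset.sup_congr rfl fun k hk => IH k (mem_nextSet.mp hk).1
  rw [hsup1]
  by_cases hiq : i = q
  · subst hiq
    have : nextSet u i = nextSet w i := by
      ext k
      rw [mem_nextSet, mem_nextSet, huq]
      constructor
      · rintro ⟨h1, h2⟩
        refine ⟨h1, ?_⟩
        have hkp : k ≠ p := fun h => absurd (h ▸ lt_trans hpq h1) (lt_irrefl _)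
        have hkq : k ≠ i := ne_of_gt h1
        rw [hux k hkp hkq] at h2
        have hwk : w k ≠ b := fun h => hkq (w.injective h)
        have h2' : (a : ℕ) < (w k : ℕ) := h2
        have hwk' : ((w k : Fin n) : ℕ) ≠ (b : ℕ) := fun h => hwk (Fin.ext h)
        rw [Fin.lt_def]
        omega
      · rintro ⟨h1, h2⟩
        refine ⟨h1, ?_⟩
        have hkp : k ≠ p := fun h => absurd (h ▸ lt_trans hpq h1) (lt_irrefl _)
        have hkq : k ≠ i := ne_of_gt h1
        rw [hux k hkp hkq]
        have h2' : (b : ℕ) < (w k : ℕ) := h2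
        rw [Fin.lt_def]
        omega
    rw [this]
  · by_cases hip : i = p
    · subst hip
      have h1 : nextSet u i = Finset.univ.filter fun k => i < k ∧ b < w k := by
        ext k
        rw [mem_nextSet, Finset.mem_filter]
        simp only [Finset.mem_univ, true_and]
        rw [hup]
        constructor
        · rintro ⟨h1, h2⟩
          refine ⟨h1, ?_⟩
          have hkp : k ≠ i := ne_of_gt h1
          by_cases hkq : k = q
          · rw [hkq, huq] at h2
            exact absurd h2 (by rw [Fin.lt_def]; omega)
          · rwa [hux k hkp hkq] at h2
        · rintro ⟨h1, h2⟩
          refine ⟨h1, ?_⟩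
          have hkp : k ≠ i := ne_of_gt h1
          have hkq : k ≠ q := fun h => absurd (h ▸ h2) (lt_irrefl _)
          rwa [hux k hkp hkq]
      have h2 : nextSet w i = insert q (Finset.univ.filter fun k => i < k ∧ b < w k) := by
        ext k
        rw [mem_nextSet, Finset.mem_insert, Finset.mem_filter]
        simp only [Finset.mem_univ, true_and]
        constructor
        · rintro ⟨h1, h2⟩
          by_cases hkq : k = q
          · exact Or.inl hkq
          · refine Or.inr ⟨h1, ?_⟩
            have : w k ≠ b := fun h => hkq (w.injective h)
            have h2' : (a : ℕ) < (w k : ℕ) := h2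
            have : ((w k : Fin n) : ℕ) ≠ (b : ℕ) := fun h => this (Fin.ext h)
            rw [Fin.lt_def]
            omega
        · rintro (rfl | ⟨h1, h2⟩)
          · exact ⟨hpq, by rw [← ha, ← hb, Fin.lt_def]; omega⟩
          · refine ⟨h1, ?_⟩
            have h2' : (b : ℕ) < (w k : ℕ) := h2
            rw [Fin.lt_def]
            omega
      rw [h1, h2, Finset.sup_insert]
      exact (sup_eq_right.mpr hcond).symm
    · have : nextSet u i = nextSet w i := by
        ext k
        rw [mem_nextSet, mem_nextSet, hux i hip hiq]
        have hwa : w i ≠ a := fun h => hip (w.injective h)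
        have hwb : w i ≠ b := fun h => hiq (w.injective h)
        have hwa' : ((w i : Fin n) : ℕ) ≠ (a : ℕ) := fun h => hwa (Fin.ext h)
        have hwb' : ((w i : Fin n) : ℕ) ≠ (b : ℕ) := fun h => hwb (Fin.ext h)
        constructor
        · rintro ⟨h1, h2⟩
          refine ⟨h1, ?_⟩
          by_cases hkp : k = p
          · rw [hkp, hup] at h2
            rw [hkp]
            have h2' : ((w i : Fin n) : ℕ) < (b : ℕ) := h2
            rw [← ha, Fin.lt_def]
            omega
          · by_cases hkq : k = q
            · rw [hkq, huq] at h2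
              rw [hkq]
              have h2' : ((w i : Fin n) : ℕ) < (a : ℕ) := h2
              rw [← hb, Fin.lt_def]
              omega
            · rwa [hux k hkp hkq] at h2
        · rintro ⟨h1, h2⟩
          refine ⟨h1, ?_⟩
          by_cases hkp : k = p
          · rw [hkp, hup]
            rw [hkp, ← ha] at h2
            have h2' : ((w i : Fin n) : ℕ) < (a : ℕ) := h2
            rw [Fin.lt_def]
            omega
          · by_cases hkq : k = q
            · rw [hkq, huq]
              rw [hkq, ← hb] at h2
              have h2' : ((w i : Fin n) : ℕ) < (b : ℕ) := h2
              rw [Fin.lt_def]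
              omega
            · rwa [hux k hkp hkq]
      rw [this]

end LeftSwap





section RightSwap

variable {w : Equiv.Perm (Fin n)} {j j' : Fin n}

/-- Right swap of adjacent positions at an ascent permutes lisFrom by the swap. -/
lemma lisFrom_mul_swap (hj' : (j' : ℕ) = (j : ℕ) + 1) (hasc : w j < w j')
    (hcond : ∃ k₀, j' < k₀ ∧ w j < w k₀ ∧
      (nextSet w j').sup (lisFrom w) < lisFrom w k₀) :
    ∀ i, lisFrom (w * Equiv.swap j j') i = lisFrom w (Equiv.swap j j' i) := by
  set σ := Equiv.swap j j' with hσ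
  set u := w * σ with hu
  have hjj' : j < j' := by rw [Fin.lt_def]; omega
  have hσj : σ j = j' := Equiv.swap_apply_left j j'
  have hσj' : σ j' = j := Equiv.swap_apply_right j j'
  have hσx : ∀ x, x ≠ j → x ≠ j' → σ x = x := fun x h1 h2 => Equiv.swap_apply_of_ne_of_ne h1 h2
  have happ : ∀ x, u x = w (σ x) := fun x => rfl
  set M := (nextSet w j').sup (lisFrom w) with hM
  set Aset := Finset.univ.filter (fun k => j' < k ∧ w j < w k) with hAset
  set Ma := Aset.sup (lisFrom w) with hMa
  obtain ⟨k₀, hk1, hk2, hk3⟩ := hcond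
  have hk0A : k₀ ∈ Aset := by
    rw [hAset]
    simp only [Finset.mem_filter, Finset.mem_univ, true_and]
    exact ⟨hk1, hk2⟩
  have hMMa : M + 1 ≤ Ma := by
    have := Finset.le_sup (f := lisFrom w) hk0A
    omega
  -- L w j' = 1 + M
  have hLj' : lisFrom w j' = 1 + M := lisFrom_rec w j'
  -- nextSet w j = insert j' Aset
  have hnwj : nextSet w j = insert j' Aset := by
    ext k
    rw [mem_nextSet, Finset.mem_insert, hAset, Finset.mem_filter]
    simp only [Finset.mem_univ, true_and]
    constructor
    · rintro ⟨h1, h2⟩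
      by_cases hkj' : k = j'
      · exact Or.inl hkj'
      · refine Or.inr ⟨?_, h2⟩
        have h1' : (j : ℕ) < (k : ℕ) := h1
        have : (k : ℕ) ≠ (j' : ℕ) := fun h => hkj' (Fin.ext h)
        rw [Fin.lt_def]
        omega
    · rintro (rfl | ⟨h1, h2⟩)
      · exact ⟨hjj', hasc⟩
      · have h1' : (j' : ℕ) < (k : ℕ) := h1
        exact ⟨by rw [Fin.lt_def]; omega, h2⟩
  -- L w j = 1 + Ma
  have hLj : lisFrom w j = 1 + Ma := by
    rw [lisFrom_rec w j, hnwj, Finset.sup_insert]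
    congr 1
    rw [← hMa]
    refine sup_eq_right.mpr ?_
    rw [hLj']
    omega
  refine downward_induction fun i IH => ?_
  by_cases hij' : i = j'
  · -- goal: lisFrom u j' = lisFrom w j
    subst hij'
    rw [hσj', lisFrom_rec u i, hLj]
    congr 1
    have hset : nextSet u i = Aset := by
      ext k
      rw [mem_nextSet, hAset, Finset.mem_filter]
      simp only [Finset.mem_univ, true_and]
      have huI : u i = w j := by rw [happ, hσj']
      rw [huI]
      constructor
      · rintro ⟨h1, h2⟩
        have hk : σ k = k := hσx k (ne_of_gt (lt_trans hjj' h1)) (ne_of_gt h1)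
        rw [happ, hk] at h2
        exact ⟨h1, h2⟩
      · rintro ⟨h1, h2⟩
        have hk : σ k = k := hσx k (ne_of_gt (lt_trans hjj' h1)) (ne_of_gt h1)
        rw [happ, hk]
        exact ⟨h1, h2⟩
    rw [hset, hMa]
    apply Finset.sup_congr rfl
    intro k hk
    rw [hAset, Finset.mem_filter] at hk
    have hik : i < k := hk.2.1
    have : σ k = k := hσx k (ne_of_gt (lt_trans hjj' hik)) (ne_of_gt hik)
    rw [IH k hik, this]
  · by_cases hij : i = j
    · -- goal: lisFrom u j = lisFrom w j'
      subst hij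
      rw [hσj, lisFrom_rec u i, hLj']
      congr 1
      have hset : nextSet u i = nextSet w j' := by
        ext k
        rw [mem_nextSet, mem_nextSet]
        have huI : u i = w j' := by rw [happ, hσj]
        rw [huI]
        constructor
        · rintro ⟨h1, h2⟩
          have hkj' : k ≠ j' := by
            intro h
            rw [h, happ, hσj'] at h2
            exact absurd (lt_trans h2 hasc) (lt_irrefl _)
          have hkgt : j' < k := by
            have h1' : (i : ℕ) < (k : ℕ) := h1
            have : (k : ℕ) ≠ (j' : ℕ) := fun h => hkj' (Fin.ext h)
            rw [Fin.lt_def]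
            omega
          have : σ k = k := hσx k (ne_of_gt (lt_trans hjj' hkgt)) hkj'
          rw [happ, this] at h2
          exact ⟨hkgt, h2⟩
        · rintro ⟨h1, h2⟩
          have : σ k = k := hσx k (ne_of_gt (lt_trans hjj' h1)) (ne_of_gt h1)
          rw [happ, this]
          exact ⟨lt_trans hjj' h1, h2⟩
      rw [hset, hM]
      apply Finset.sup_congr rfl
      intro k hk
      rw [mem_nextSet] at hk
      have hik : i < k := lt_trans hjj' hk.1
      have : σ k = k := hσx k (ne_of_gt hik) (ne_of_gt hk.1)
      rw [IH k hik, this]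
    · by_cases higt : j' < i
      · -- i beyond the swap window
        have hσi : σ i = i := hσx i (ne_of_gt (lt_trans hjj' higt)) (ne_of_gt higt)
        rw [hσi, lisFrom_rec u i, lisFrom_rec w i]
        congr 1
        have hset : nextSet u i = nextSet w i := by
          ext k
          rw [mem_nextSet, mem_nextSet, happ, hσi]
          constructor
          · rintro ⟨h1, h2⟩
            have : σ k = k := hσx k (ne_of_gt (lt_trans (lt_trans hjj' higt) h1))
              (ne_of_gt (lt_trans higt h1))
            rw [happ, this] at h2
            exact ⟨h1, h2⟩
          · rintro ⟨h1, h2⟩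
            have : σ k = k := hσx k (ne_of_gt (lt_trans (lt_trans hjj' higt) h1))
              (ne_of_gt (lt_trans higt h1))
            rw [happ, this]
            exact ⟨h1, h2⟩
        rw [hset]
        apply Finset.sup_congr rfl
        intro k hk
        rw [mem_nextSet] at hk
        have : σ k = k := hσx k (ne_of_gt (lt_trans (lt_trans hjj' higt) hk.1))
          (ne_of_gt (lt_trans higt hk.1))
        rw [IH k hk.1, this]
      · -- i < j
        have hilt : i < j := by
          have h1 : (i : ℕ) ≠ (j : ℕ) := fun h => hij (Fin.ext h)
          have h2 : (i : ℕ) ≠ (j' : ℕ) := fun h => hij' (Fin.ext h)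
          have h3 : ¬ ((j' : ℕ) < (i : ℕ)) := fun h => higt (by rw [Fin.lt_def]; exact h)
          rw [Fin.lt_def]
          omega
        have hσi : σ i = i := hσx i hij hij'
        have hgti : ∀ k : Fin n, i < k → i < σ k := by
          intro k hk
          by_cases h1 : k = j
          · rw [h1, hσj, Fin.lt_def]
            have := Fin.lt_def.mp hilt
            omega
          · by_cases h2 : k = j'
            · rw [h2, hσj']
              exact hilt
            · rwa [hσx k h1 h2]
        rw [hσi, lisFrom_rec u i, lisFrom_rec w i]
        congr 1
        have himage : nextSet u i = (nextSet w i).image σ := by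
          ext k
          rw [mem_nextSet, Finset.mem_image]
          constructor
          · rintro ⟨h1, h2⟩
            refine ⟨σ k, ?_, ?_⟩
            · rw [mem_nextSet]
              rw [happ, hσi] at h2
              exact ⟨hgti k h1, h2⟩
            · simp [hσ, Equiv.swap_apply_self]
          · rintro ⟨k', hk', rfl⟩
            rw [mem_nextSet] at hk'
            refine ⟨hgti k' hk'.1, ?_⟩
            have hss : σ (σ k') = k' := by simp [hσ, Equiv.swap_apply_self]
            rw [happ, hσi, happ, hss]
            exact hk'.2
        rw [himage, Finset.sup_image]
        apply Finset.sup_congr rfl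
        intro k hk
        rw [mem_nextSet] at hk
        have hik : i < σ k := hgti k hk.1
        have : σ (σ k) = k := by simp [hσ, Equiv.swap_apply_self]
        simp only [Function.comp_apply]
        rw [IH (σ k) hik, this]

end RightSwap


lemma shape_eq_of_lis_eq {u w : Equiv.Perm (Fin n)} (h : ∀ i, lisFrom u i = lisFrom w i) :
    shape u = shape w := by
  have hr : ∀ i, rajCode u i = rajCode w i := fun i => by unfold rajCode; rw [h i]
  have he : ∀ i, eps u i = eps w i := fun i => by unfold eps; rw [hr i]
  funext k
  unfold shape
  congr 1
  apply Finset.filter_congr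
  intro i _
  rw [he i]

lemma shape_eq_of_comp {u w : Equiv.Perm (Fin n)} (σ : Equiv.Perm (Fin n))
    (h : ∀ i, lisFrom u i = lisFrom w (σ i)) : shape u = shape w := by
  have he : ∀ i, eps u i = eps w (σ i) := fun i => by
    rw [eps_eq, eps_eq, h i]
  funext k
  unfold shape
  apply Finset.card_bij (fun i _ => σ i)
  · intro i hi
    simp only [Finset.mem_filter, Finset.mem_univ, true_and] at hi ⊢
    rw [← he i]
    exact hi
  · intro i _ i' _ hii'
    exact σ.injective hii'
  · intro i hi
    refine ⟨σ⁻¹ i, ?_, by simp⟩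
    simp only [Finset.mem_filter, Finset.mem_univ, true_and] at hi ⊢
    rw [he (σ⁻¹ i)]
    simpa using hi

lemma exists_gap1 {w : Equiv.Perm (Fin n)}
    (h : ∃ i j k : Fin n, i < j ∧ j < k ∧ w i < w k ∧ w k < w j) :
    ∃ p q jm : Fin n, p < jm ∧ jm < q ∧ ((w q : Fin n) : ℕ) = ((w p : Fin n) : ℕ) + 1 ∧
      w q < w jm := by
  obtain ⟨i, j, k, h1, h2, h3, h4⟩ := h
  have key : ∀ g : ℕ, ∀ i j k : Fin n, i < j → j < k → w i < w k → w k < w j →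
      ((w k : Fin n) : ℕ) ≤ ((w i : Fin n) : ℕ) + g →
      ∃ p q jm : Fin n, p < jm ∧ jm < q ∧ ((w q : Fin n) : ℕ) = ((w p : Fin n) : ℕ) + 1 ∧
        w q < w jm := by
    intro g
    induction g with
    | zero =>
      intro i j k _ _ h3 _ hg
      have : ((w i : Fin n) : ℕ) < ((w k : Fin n) : ℕ) := h3
      omega
    | succ g ih =>
      intro i j k h1 h2 h3 h4 hg
      have h3' : ((w i : Fin n) : ℕ) < ((w k : Fin n) : ℕ) := h3
      by_cases hgap : ((w k : Fin n) : ℕ) = ((w i : Fin n) : ℕ) + 1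
      · exact ⟨i, k, j, h1, h2, hgap, h4⟩
      · have hc : ((w i : Fin n) : ℕ) + 1 < n := by
          have := (w k).isLt
          omega
        set c : Fin n := ⟨((w i : Fin n) : ℕ) + 1, hc⟩ with hcdef
        set m : Fin n := w⁻¹ c with hm
        have hwm : w m = c := by rw [hm]; simp
        have hwm1 : ((w m : Fin n) : ℕ) = ((w i : Fin n) : ℕ) + 1 := by rw [hwm]
        have hmk : w m < w k := by rw [Fin.lt_def]; omega
        have hmj : m ≠ j := by
          intro heq
          rw [← heq] at h4
          exact absurd (lt_trans h4 hmk) (lt_irrefl _)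
        have hg1 : 1 ≤ g := by omega
        rcases lt_or_gt_of_ne hmj with hlt | hgt
        · exact ih m j k hlt h2 hmk h4 (by omega)
        · have hwi : w i < w m := by rw [Fin.lt_def]; omega
          have hmwj : w m < w j := lt_trans hmk h4
          exact ih i j m h1 hgt hwi hmwj (by omega)
  exact key n i j k h1 h2 h3 h4 (by have := (w k).isLt; omega)

lemma exists_move {w : Equiv.Perm (Fin n)} (hnd : ¬ Dominant w) :
    ∃ u : Equiv.Perm (Fin n), u ≠ w ∧ (leL w u ∨ leR w u) ∧ shape u = shape w := by
  rw [Dominant, not_not] at hnd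
  obtain ⟨p, q, jm, hpjm, hjmq, hq, hwjm⟩ := exists_gap1 hnd
  have hpq : p < q := lt_trans hpjm hjmq
  by_cases hc : lisFrom w q ≤
      ((Finset.univ.filter fun k => p < k ∧ w q < w k)).sup (lisFrom w)
  · -- left move
    set v := Equiv.swap (w p) (w q) with hv
    refine ⟨v * w, ?_, Or.inl ?_, ?_⟩
    · intro heq
      have : (v * w) p = w p := by rw [heq]
      rw [Equiv.Perm.mul_apply, hv, Equiv.swap_apply_left] at this
      have := w.injective this
      exact absurd (this ▸ hpq) (lt_irrefl _)
    · refine ⟨v, rfl, ?_⟩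
      have hpos : w⁻¹ (w p) < w⁻¹ (w q) := by simpa using hpq
      rw [invNum_swap_mul hq hpos, invNum_swap_adj hq]
      omega
    · exact shape_eq_of_lis_eq (lisFrom_swap_mul hpq hq hc)
  · -- right move
    push_neg at hc
    have hNS : ∀ k : Fin n, p < k → w q < w k → lisFrom w k < lisFrom w q := by
      intro k h1 h2
      calc lisFrom w k ≤ _ := Finset.le_sup (f := lisFrom w)
            (by simp only [Finset.mem_filter, Finset.mem_univ, true_and]; exact ⟨h1, h2⟩)
        _ < lisFrom w q := hc
    set T := Finset.univ.filter (fun k => p < k ∧ k < q ∧ w q < w k) with hT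
    have hTne : T.Nonempty := ⟨jm, by
      simp only [hT, Finset.mem_filter, Finset.mem_univ, true_and]
      exact ⟨hpjm, hjmq, hwjm⟩⟩
    set t := T.min' hTne with ht
    have htmem : t ∈ Finset.univ.filter (fun k => p < k ∧ k < q ∧ w q < w k) :=
      T.min'_mem hTne
    rw [Finset.mem_filter] at htmem
    obtain ⟨-, hpt, htq, hwt⟩ := htmem
    have htpos : 1 ≤ (t : ℕ) := by
      have : (p : ℕ) < (t : ℕ) := hpt
      omega
    set j₀ : Fin n := ⟨(t : ℕ) - 1, by have := t.isLt; omega⟩ with hj₀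
    have hj' : (t : ℕ) = (j₀ : ℕ) + 1 := by rw [hj₀]; simp; omega
    have hj₀t : j₀ < t := by rw [Fin.lt_def]; omega
    have hpj₀ : (p : ℕ) ≤ (j₀ : ℕ) := by
      have h1 : (p : ℕ) < (t : ℕ) := hpt
      omega
    have hwj₀q : w j₀ < w q := by
      rcases eq_or_lt_of_le hpj₀ with heq | hlt
      · have hpe : p = j₀ := Fin.ext heq
        rw [← hpe, Fin.lt_def]
        omega
      · have hj₀nT : ¬ (p < j₀ ∧ j₀ < q ∧ w q < w j₀) := by
          intro hmem
          have hmem' : j₀ ∈ T := Finset.mem_filter.mpr ⟨Finset.mem_univ _, hmem⟩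
          have h1 := T.min'_le j₀ hmem'
          have h2 : (t : ℕ) ≤ (j₀ : ℕ) := ht ▸ h1
          omega
        have hj₀q : j₀ < q := lt_trans hj₀t htq
        have hnlt : ¬ w q < w j₀ := fun hcon =>
          hj₀nT ⟨by rw [Fin.lt_def]; omega, hj₀q, hcon⟩
        have hne : w j₀ ≠ w q := fun h => (ne_of_lt hj₀q) (w.injective h)
        exact lt_of_le_of_ne (not_lt.mp hnlt) hne
    have hasc : w j₀ < w t := lt_trans hwj₀q hwt
    have hcond : ∃ k₀, t < k₀ ∧ w j₀ < w k₀ ∧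
        (nextSet w t).sup (lisFrom w) < lisFrom w k₀ := by
      refine ⟨q, htq, hwj₀q, ?_⟩
      rw [Finset.sup_lt_iff (by rw [Nat.bot_eq_zero]; have := one_le_lisFrom w q; omega)]
      intro m hm
      rw [mem_nextSet] at hm
      exact hNS m (lt_trans hpt hm.1) (lt_trans hwt hm.2)
    set σ := Equiv.swap j₀ t with hσ
    refine ⟨w * σ, ?_, Or.inr ?_, ?_⟩
    · intro heq
      have h1 : (w * σ) j₀ = w j₀ := by rw [heq]
      rw [Equiv.Perm.mul_apply, hσ, Equiv.swap_apply_left] at h1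
      have := w.injective h1
      exact absurd (this ▸ hj₀t) (lt_irrefl _)
    · refine ⟨σ, rfl, ?_⟩
      rw [invNum_mul_swap hj' hasc, invNum_swap_adj hj']
    · exact shape_eq_of_comp σ (lisFrom_mul_swap hj' hasc hcond)

/-- `w` is dominant iff `w` is maximal in two-sided weak order among
permutations of its shape. -/
theorem dominant_iff_maximal_in_shape (n : ℕ) (w : Equiv.Perm (Fin n)) :
    Dominant w ↔
      ¬ ∃ u : Equiv.Perm (Fin n), u ≠ w ∧ leLR w u ∧ shape u = shape w := by
  constructor
  · rintro hd ⟨u, hne, hle, hsh⟩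
    have h1 := leLR_invNum hle
    have h2 : invNum u ≤ raj u := invNum_le_raj u
    have h3 : raj u = raj w := raj_eq_of_shape hsh
    have h4 : invNum w = raj w := dominant_invNum_eq_raj hd
    exact hne (h1.2 (by omega)).symm
  · intro hmax
    by_contra hnd
    obtain ⟨u, hne, hstep, hsh⟩ := exists_move hnd
    exact hmax ⟨u, hne, Relation.ReflTransGen.single hstep, hsh⟩

end RajRegularity
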